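/- Let A be a complete normed ring (Banach algebra) over ℝ with 1. Let PG denote the set of differentiable maps p : ℝ → A all of whose values are units, with p(0) = 1 and whose logarithmic derivative t ↦ p(t)⁻¹·p′(t) is 2π-periodic; let ΩG denote the set of differentiable 2π-periodic maps γ : ℝ → A all of whose values are units, with γ(0) = 1. Then for every p ∈ PG, γ ∈ ΩG and every unit g of A, the map θ ↦ g⁻¹·p(θ)·g·γ(θ) again belongs to PG. -/

import Mathlib

open Real

variable (A : Type*) [NormedRing A] [NormedAlgebra ℝ A] [CompleteSpace A]

/-- Membership in the path space `PG`: differentiable unit-valued maps `p : ℝ → A` with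
`p 0 = 1` whose logarithmic derivative `t ↦ p t ⁻¹ * p' t` is `2π`-periodic. -/
def MemPG (p : ℝ → A) : Prop :=
  Differentiable ℝ p ∧ (∀ t, IsUnit (p t)) ∧ p 0 = 1 ∧
    Function.Periodic (fun t => Ring.inverse (p t) * deriv p t) (2 * π)

/-- Membership in the based loop group `ΩG`: differentiable `2π`-periodic unit-valued maps
`γ : ℝ → A` with `γ 0 = 1`. -/
def MemOmegaG (γ : ℝ → A) : Prop :=
  Differentiable ℝ γ ∧ Function.Periodic γ (2 * π) ∧ (∀ t, IsUnit (γ t)) ∧ γ 0 = 1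

/-- The action `(p, g, γ) ↦ (θ ↦ g⁻¹ p(θ) g γ(θ))` of `ΩG ⋊ G` preserves the path space
`PG`: this is the well-definedness of the `ΩG ⋊ G` action on `PG × EG`. -/
theorem memPG_conj_action (p γ : ℝ → A) (hp : MemPG A p) (hγ : MemOmegaG A γ) (g : Aˣ) :
    MemPG A (fun θ => ↑g⁻¹ * p θ * ↑g * γ θ) := by
  obtain ⟨hpd, hpu, hp0, hpp⟩ := hp
  obtain ⟨hγd, hγp, hγu, hγ0⟩ := hγ
  have hqd : Differentiable ℝ (fun θ => (g⁻¹ : Aˣ) * p θ * ↑g * γ θ) :=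
    (((hpd.const_mul _).mul_const _).mul hγd)
  have hqu : ∀ t, IsUnit ((g⁻¹ : Aˣ) * p t * ↑g * γ t) := fun t =>
    ((g⁻¹.isUnit.mul (hpu t)).mul g.isUnit).mul (hγu t)
  refine ⟨hqd, hqu, by simp [hp0, hγ0], ?_⟩
  -- Compute the derivative of q.
  have hderiv : ∀ t, deriv (fun θ => (g⁻¹ : Aˣ) * p θ * ↑g * γ θ) t
      = (↑g⁻¹ * deriv p t * ↑g) * γ t + (↑g⁻¹ * p t * ↑g) * deriv γ t := by
    intro t
    have h1 : HasDerivAt (fun θ => (g⁻¹ : Aˣ) * p θ * ↑g) (↑g⁻¹ * deriv p t * ↑g) t :=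
      (((hpd t).hasDerivAt.const_mul (↑g⁻¹ : A)).mul_const (↑g : A))
    exact (h1.mul (hγd t).hasDerivAt).deriv
  -- The inverse of q.
  have hinv : ∀ t, Ring.inverse ((g⁻¹ : Aˣ) * p t * ↑g * γ t)
      = Ring.inverse (γ t) * ↑g⁻¹ * Ring.inverse (p t) * ↑g := by
    intro t
    have hu := hpu t
    have hv := hγu t
    have : ((g⁻¹ : Aˣ) * p t * ↑g * γ t)
        = ((g⁻¹ * hu.unit * g * hv.unit : Aˣ) : A) := by
      simp [hu.unit_spec, hv.unit_spec]
    rw [this, Ring.inverse_unit]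
    simp only [mul_inv_rev, inv_inv, Units.val_mul, ← Ring.inverse_unit, hu.unit_spec, hv.unit_spec,
      mul_assoc]
  -- The logarithmic derivative of q.
  have hlog : ∀ t, Ring.inverse ((g⁻¹ : Aˣ) * p t * ↑g * γ t)
        * deriv (fun θ => (g⁻¹ : Aˣ) * p θ * ↑g * γ θ) t
      = Ring.inverse (γ t) * (↑g⁻¹ * (Ring.inverse (p t) * deriv p t) * ↑g) * γ t
        + Ring.inverse (γ t) * deriv γ t := by
    intro t
    rw [hderiv t, hinv t]
    have hpi : Ring.inverse (p t) * p t = 1 := Ring.inverse_mul_cancel _ (hpu t)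
    rw [mul_add]
    congr 1
    · simp only [mul_assoc, Units.mul_inv_cancel_left]
    · simp only [mul_assoc, Units.mul_inv_cancel_left]
      rw [← mul_assoc (Ring.inverse (p t)) (p t), hpi, one_mul,
        Units.inv_mul_cancel_left]
  -- Periodicity.
  intro t
  simp only [hlog]
  have hγderiv : deriv γ (t + 2 * π) = deriv γ t := by
    rw [← deriv_comp_add_const γ (2 * π) t]
    congr 1
    funext s
    exact hγp s
  rw [hγp t, hγderiv]
  have := hpp t
  simp only at this
  rw [this]
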